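/- Let n be odd. Define, for 1 ≤ i ≤ (n-1)/2, A_i = { {x,y} : x,y ∈ {0,...,n-1}, y - x ≡ ±i (mod n) } and B_i = { {x,y} : x,y ∈ {n,...,2n-1}, y - x ≡ ±i (mod n) }, and for 0 ≤ i ≤ n-1, C_i = { {x,y} : 0 ≤ x ≤ n-1, n ≤ y ≤ 2n-1, x+y ≡ i (mod n) }. Then the union of all A_i, B_i (1 ≤ i ≤ (n-1)/2) and all C_i (0 ≤ i ≤ n-1) equals the set of all 2-element subsets of {0,1,...,2n-1}, and these sets are pairwise disjoint. -/
import Mathlib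


/-- `A_i = { {x,y} ⊆ {0,…,n-1} : y - x ≡ ±i (mod n) }`. -/
def AA (n i : ℕ) : Set (Finset ℕ) :=
  { p | ∃ x y : ℕ, x < n ∧ y < n ∧ x ≠ y ∧
      ((y + n - x) % n = i ∨ (x + n - y) % n = i) ∧ p = {x, y} }

/-- `B_i = { {x,y} ⊆ {n,…,2n-1} : y - x ≡ ±i (mod n) }`. -/
def BB (n i : ℕ) : Set (Finset ℕ) :=
  { p | ∃ x y : ℕ, n ≤ x ∧ x < 2 * n ∧ n ≤ y ∧ y < 2 * n ∧ x ≠ y ∧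
      ((y + n - x) % n = i ∨ (x + n - y) % n = i) ∧ p = {x, y} }

/-- `C_i = { {x,y} : 0 ≤ x ≤ n-1, n ≤ y ≤ 2n-1, x + y ≡ i (mod n) }`. -/
def CC (n i : ℕ) : Set (Finset ℕ) :=
  { p | ∃ x y : ℕ, x < n ∧ n ≤ y ∧ y < 2 * n ∧ (x + y) % n = i ∧ p = {x, y} }

lemma pair_eq_cases {a b c d : ℕ} (h : ({a, b} : Finset ℕ) = {c, d}) (hab : a ≠ b) :
    (a = c ∧ b = d) ∨ (a = d ∧ b = c) := by
  have ha : a ∈ ({c, d} : Finset ℕ) := by rw [← h]; simp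
  have hb : b ∈ ({c, d} : Finset ℕ) := by rw [← h]; simp
  have hc : c ∈ ({a, b} : Finset ℕ) := by rw [h]; simp
  have hd : d ∈ ({a, b} : Finset ℕ) := by rw [h]; simp
  simp only [Finset.mem_insert, Finset.mem_singleton] at ha hb hc hd
  omega

lemma key_mod (n x y : ℕ) (hxy : x < y) (hd : y - x < n) :
    (y + n - x) % n = y - x ∧ (x + n - y) % n = n - (y - x) := by
  constructor
  · have h1 : y + n - x = (y - x) + n := by omega
    rw [h1, Nat.add_mod_right, Nat.mod_eq_of_lt hd]
  · have h2 : x + n - y = n - (y - x) := by omega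
    rw [h2, Nat.mod_eq_of_lt (by omega)]

lemma uniq (n i j x y : ℕ) (hxy : x < y) (hd : y - x < n)
    (hi2 : 2 * i < n) (hj2 : 2 * j < n)
    (hi : (y + n - x) % n = i ∨ (x + n - y) % n = i)
    (hj : (y + n - x) % n = j ∨ (x + n - y) % n = j) : i = j := by
  obtain ⟨h1, h2⟩ := key_mod n x y hxy hd
  rw [h1, h2] at hi hj
  omega

lemma uniq' (n i j x y : ℕ) (hxy : x ≠ y) (hd : y - x < n) (hd' : x - y < n)
    (hi2 : 2 * i < n) (hj2 : 2 * j < n)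
    (hi : (y + n - x) % n = i ∨ (x + n - y) % n = i)
    (hj : (y + n - x) % n = j ∨ (x + n - y) % n = j) : i = j := by
  rcases Nat.lt_or_ge x y with h | h
  · exact uniq n i j x y h hd hi2 hj2 hi hj
  · exact uniq n i j y x (by omega) hd' hi2 hj2 hi.symm hj.symm

theorem partition_pairs (n : ℕ) (hn : Odd n) :
    ((⋃ i ∈ Set.Icc 1 ((n - 1) / 2), AA n i) ∪ (⋃ i ∈ Set.Icc 1 ((n - 1) / 2), BB n i) ∪
        (⋃ i ∈ Set.Iio n, CC n i)) =
      { p : Finset ℕ | p.card = 2 ∧ ∀ x ∈ p, x < 2 * n } ∧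
    (∀ i ∈ Set.Icc 1 ((n - 1) / 2), ∀ j ∈ Set.Icc 1 ((n - 1) / 2), i ≠ j →
      Disjoint (AA n i) (AA n j)) ∧
    (∀ i ∈ Set.Icc 1 ((n - 1) / 2), ∀ j ∈ Set.Icc 1 ((n - 1) / 2), i ≠ j →
      Disjoint (BB n i) (BB n j)) ∧
    (∀ i ∈ Set.Iio n, ∀ j ∈ Set.Iio n, i ≠ j → Disjoint (CC n i) (CC n j)) ∧
    (∀ i ∈ Set.Icc 1 ((n - 1) / 2), ∀ j ∈ Set.Icc 1 ((n - 1) / 2),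
      Disjoint (AA n i) (BB n j)) ∧
    (∀ i ∈ Set.Icc 1 ((n - 1) / 2), ∀ j ∈ Set.Iio n, Disjoint (AA n i) (CC n j)) ∧
    (∀ i ∈ Set.Icc 1 ((n - 1) / 2), ∀ j ∈ Set.Iio n, Disjoint (BB n i) (CC n j)) := by
  obtain ⟨k, hk⟩ := hn
  have hn0 : 0 < n := by omega
  have hrange : ∀ i, i ∈ Set.Icc 1 ((n - 1) / 2) → 1 ≤ i ∧ 2 * i < n := by
    intro i hi
    obtain ⟨h1, h2⟩ := hi
    constructor
    · exact h1
    · omega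
  refine ⟨?_, ?_, ?_, ?_, ?_, ?_, ?_⟩
  · -- union
    ext p
    simp only [Set.mem_union, Set.mem_iUnion, Set.mem_setOf_eq, Set.mem_Icc, Set.mem_Iio,
      exists_prop]
    constructor
    · rintro ((⟨i, hi, x, y, hx, hy, hxy, hc, rfl⟩ | ⟨i, hi, x, y, hx1, hx2, hy1, hy2, hxy, hc, rfl⟩) |
        ⟨i, hi, x, y, hx, hy1, hy2, hc, rfl⟩)
      · refine ⟨Finset.card_pair hxy, ?_⟩
        intro z hz
        simp only [Finset.mem_insert, Finset.mem_singleton] at hz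
        omega
      · refine ⟨Finset.card_pair hxy, ?_⟩
        intro z hz
        simp only [Finset.mem_insert, Finset.mem_singleton] at hz
        omega
      · refine ⟨Finset.card_pair (by omega), ?_⟩
        intro z hz
        simp only [Finset.mem_insert, Finset.mem_singleton] at hz
        omega
    · rintro ⟨hcard, hbd⟩
      obtain ⟨x, y, hxy, rfl⟩ := Finset.card_eq_two.mp hcard
      have hx : x < 2 * n := hbd x (by simp)
      have hy : y < 2 * n := hbd y (by simp)
      have main : ∀ a b : ℕ, a < b → b < 2 * n → ({a, b} : Finset ℕ) = {x, y} →
          ((∃ i, (1 ≤ i ∧ i ≤ (n - 1) / 2) ∧ {x, y} ∈ AA n i) ∨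
           (∃ i, (1 ≤ i ∧ i ≤ (n - 1) / 2) ∧ {x, y} ∈ BB n i)) ∨
          (∃ i, i < n ∧ {x, y} ∈ CC n i) := by
        intro a b hab hb2 hp
        rcases Nat.lt_or_ge b n with hbn | hbn
        · -- AA case
          left; left
          set d := b - a with hd
          have hd1 : 1 ≤ d := by omega
          have hdn : d < n := by omega
          obtain ⟨e1, e2⟩ := key_mod n a b hab hdn
          rcases Nat.lt_or_ge (2 * d) n with h2d | h2d
          · exact ⟨d, ⟨by omega, by omega⟩, a, b, by omega, hbn, by omega,
              Or.inl e1, hp.symm⟩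
          · exact ⟨n - d, ⟨by omega, by omega⟩, a, b, by omega, hbn, by omega,
              Or.inr e2, hp.symm⟩
        · rcases Nat.lt_or_ge a n with han | han
          · -- CC case
            right
            exact ⟨(a + b) % n, Nat.mod_lt _ hn0, a, b, han, hbn, hb2, rfl, hp.symm⟩
          · -- BB case
            left; right
            set d := b - a with hd
            have hd1 : 1 ≤ d := by omega
            have hdn : d < n := by omega
            obtain ⟨e1, e2⟩ := key_mod n a b hab hdn
            rcases Nat.lt_or_ge (2 * d) n with h2d | h2d
            · exact ⟨d, ⟨by omega, by omega⟩, a, b, han, by omega, hbn, hb2, by omega,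
                Or.inl e1, hp.symm⟩
            · exact ⟨n - d, ⟨by omega, by omega⟩, a, b, han, by omega, hbn, hb2, by omega,
                Or.inr e2, hp.symm⟩
      rcases Nat.lt_or_ge x y with h | h
      · exact main x y h hy rfl
      · exact main y x (by omega) hx (Finset.pair_comm y x)
  · -- AA AA
    intro i hi j hj hij
    obtain ⟨hi1, hi2⟩ := hrange i hi
    obtain ⟨hj1, hj2⟩ := hrange j hj
    rw [Set.disjoint_left]
    rintro p ⟨x, y, hx, hy, hxy, hc, rfl⟩ ⟨x', y', hx', hy', hxy', hc', hp⟩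
    rcases pair_eq_cases hp hxy with ⟨rfl, rfl⟩ | ⟨rfl, rfl⟩
    · exact hij (uniq' n i j x y hxy (by omega) (by omega) hi2 hj2 hc hc')
    · exact hij (uniq' n i j x y hxy (by omega) (by omega) hi2 hj2 hc hc'.symm)
  · -- BB BB
    intro i hi j hj hij
    obtain ⟨hi1, hi2⟩ := hrange i hi
    obtain ⟨hj1, hj2⟩ := hrange j hj
    rw [Set.disjoint_left]
    rintro p ⟨x, y, hx1, hx2, hy1, hy2, hxy, hc, rfl⟩ ⟨x', y', hx1', hx2', hy1', hy2', hxy', hc', hp⟩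
    rcases pair_eq_cases hp hxy with ⟨rfl, rfl⟩ | ⟨rfl, rfl⟩
    · exact hij (uniq' n i j x y hxy (by omega) (by omega) hi2 hj2 hc hc')
    · exact hij (uniq' n i j x y hxy (by omega) (by omega) hi2 hj2 hc hc'.symm)
  · -- CC CC
    intro i hi j hj hij
    rw [Set.disjoint_left]
    rintro p ⟨x, y, hx, hy1, hy2, hc, rfl⟩ ⟨x', y', hx', hy1', hy2', hc', hp⟩
    rcases pair_eq_cases hp (by omega) with ⟨rfl, rfl⟩ | ⟨rfl, rfl⟩
    · exact hij (hc ▸ hc'.symm ▸ rfl)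
    · omega
  · -- AA BB
    intro i hi j hj
    rw [Set.disjoint_left]
    rintro p ⟨x, y, hx, hy, hxy, hc, rfl⟩ ⟨x', y', hx1', hx2', hy1', hy2', hxy', hc', hp⟩
    have : x' ∈ ({x, y} : Finset ℕ) := by rw [hp]; simp
    simp only [Finset.mem_insert, Finset.mem_singleton] at this
    omega
  · -- AA CC
    intro i hi j hj
    rw [Set.disjoint_left]
    rintro p ⟨x, y, hx, hy, hxy, hc, rfl⟩ ⟨x', y', hx', hy1', hy2', hc', hp⟩
    have : y' ∈ ({x, y} : Finset ℕ) := by rw [hp]; simp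
    simp only [Finset.mem_insert, Finset.mem_singleton] at this
    omega
  · -- BB CC
    intro i hi j hj
    rw [Set.disjoint_left]
    rintro p ⟨x, y, hx1, hx2, hy1, hy2, hxy, hc, rfl⟩ ⟨x', y', hx', hy1', hy2', hc', hp⟩
    have : x' ∈ ({x, y} : Finset ℕ) := by rw [hp]; simp
    simp only [Finset.mem_insert, Finset.mem_singleton] at this
    omega
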